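/- For every integer m ≥ 4, the deterministic query complexity of f_{2m,m} satisfies D(f_{2m,m}) ≥ m². -/

import Mathlib

open Classical
open scoped ENNReal

set_option maxHeartbeats 1000000

/-! ### Deterministic decision trees -/

inductive DTree (ι σ : Type) : Type
  | leaf (b : Bool) : DTree ι σ
  | node (v : ι) (child : σ → DTree ι σ) : DTree ι σ

namespace DTree

variable {ι σ : Type}

/-- The output of the decision tree on input `x`. -/
def eval (x : ι → σ) : DTree ι σ → Bool
  | leaf b => b
  | node v child => (child (x v)).eval x

/-- The list of variables queried by the decision tree on input `x`,
in the order they are queried. -/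
def queryList (x : ι → σ) : DTree ι σ → List ι
  | leaf _ => []
  | node v child => v :: (child (x v)).queryList x

/-- The cost of the decision tree on input `x`: the number of internal nodes visited. -/
def cost (T : DTree ι σ) (x : ι → σ) : ℕ := (T.queryList x).length

/-- `T` computes `f` if it outputs `f x` on every input `x`. -/
def Computes (T : DTree ι σ) (f : (ι → σ) → Bool) : Prop := ∀ x, T.eval x = f x

end DTree

/-- Deterministic query complexity. -/
noncomputable def detComplexity {ι σ : Type} (f : (ι → σ) → Bool) : ℕ :=
  sInf {d : ℕ | ∃ T : DTree ι σ, T.Computes f ∧ ∀ x, T.cost x ≤ d}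

/-- Expected cost of a randomized decision tree (a distribution over deterministic
decision trees) on input `x`. -/
noncomputable def expCost {ι σ : Type} (μ : PMF (DTree ι σ)) (x : ι → σ) : ℝ≥0∞ :=
  ∑' T : DTree ι σ, μ T * (T.cost x : ℝ≥0∞)

/-- Zero-error (Las Vegas) randomized query complexity. -/
noncomputable def R0query {ι σ : Type} (f : (ι → σ) → Bool) : ℝ≥0∞ :=
  ⨅ μ ∈ {μ : PMF (DTree ι σ) | ∀ T ∈ μ.support, T.Computes f},
    ⨆ x : ι → σ, expCost μ x

/-- One-sided error randomized query complexity. -/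
noncomputable def R1query {ι σ : Type} (f : (ι → σ) → Bool) : ℝ≥0∞ :=
  ⨅ μ ∈ {μ : PMF (DTree ι σ) |
      (∀ x, f x = false → ∀ T ∈ μ.support, T.eval x = false) ∧
      (∀ x, f x = true → 1 / 2 ≤ ∑' T : DTree ι σ, if T.eval x = true then μ T else 0)},
    ⨆ x : ι → σ, expCost μ x

/-- Bounded-error (Monte Carlo) randomized query complexity. -/
noncomputable def Rquery {ι σ : Type} (f : (ι → σ) → Bool) : ℝ≥0∞ :=
  ⨅ μ ∈ {μ : PMF (DTree ι σ) |
      ∀ x, 9 / 10 ≤ ∑' T : DTree ι σ, if T.eval x = f x then μ T else 0},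
    ⨆ x : ι → σ, expCost μ x
/-! ### Quantum query algorithms -/

/-- The standard quantum query oracle `O_x |j,p⟩|w⟩ = |j, p + x_j mod S⟩|w⟩`,
as a matrix. -/
noncomputable def qOracle {V ω : Type} [DecidableEq V] [DecidableEq ω] {S : ℕ}
    (x : V → Fin S) : Matrix (V × Fin S × ω) (V × Fin S × ω) ℂ :=
  fun r c => if r = (c.1, c.2.1 + x c.1, c.2.2) then 1 else 0

/-- A quantum query algorithm on inputs `x : V → Fin S`, making `queries` queries, with
workspace `Fin (W+1)`, alternating the unitaries `U 0, …, U queries` with the oracle,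
and measuring with the projector `P` at the end. -/
structure QAlg (V : Type) [Fintype V] [DecidableEq V] (S : ℕ) [NeZero S] where
  queries : ℕ
  W : ℕ
  init : V
  U : ℕ → Matrix (V × Fin S × Fin (W + 1)) (V × Fin S × Fin (W + 1)) ℂ
  hU : ∀ t, (U t).conjTranspose * U t = 1 ∧ U t * (U t).conjTranspose = 1
  P : Matrix (V × Fin S × Fin (W + 1)) (V × Fin S × Fin (W + 1)) ℂ
  hP : P.conjTranspose = P ∧ P * P = P

namespace QAlg

variable {V : Type} [Fintype V] [DecidableEq V] {S : ℕ} [NeZero S]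

/-- The state of the quantum algorithm after `t` steps on input `x`. -/
noncomputable def state (A : QAlg V S) (x : V → Fin S) :
    ℕ → (V × Fin S × Fin (A.W + 1) → ℂ)
  | 0 => (A.U 0).mulVec fun r => if r = (A.init, 0, 0) then 1 else 0
  | t + 1 => (A.U (t + 1)).mulVec ((qOracle x).mulVec (A.state x t))

/-- The probability that the algorithm accepts input `x`: `‖P |Ψ_x⟩‖²`. -/
noncomputable def acceptProb (A : QAlg V S) (x : V → Fin S) : ℝ :=
  ∑ r : V × Fin S × Fin (A.W + 1), Complex.normSq (A.P.mulVec (A.state x A.queries) r)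

end QAlg

/-- Bounded-error quantum query complexity (for functions over a finite input
alphabet `σ`, identified with `Fin (card σ)` via a fixed bijection). -/
noncomputable def Qquery {V σ : Type} [Fintype V] [DecidableEq V] [Fintype σ] [Nonempty σ]
    (f : (V → σ) → Bool) : ℕ :=
  letI : NeZero (Fintype.card σ) := ⟨Fintype.card_ne_zero⟩
  sInf {t : ℕ | ∃ A : QAlg V (Fintype.card σ), A.queries = t ∧
    ∀ x : V → σ,
      (f x = true → 9 / 10 ≤ A.acceptProb fun j => Fintype.equivFin σ (x j)) ∧
      (f x = false → A.acceptProb (fun j => Fintype.equivFin σ (x j)) ≤ 1 / 10)}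

/-- Exact quantum query complexity. -/
noncomputable def QEquery {V σ : Type} [Fintype V] [DecidableEq V] [Fintype σ] [Nonempty σ]
    (f : (V → σ) → Bool) : ℕ :=
  letI : NeZero (Fintype.card σ) := ⟨Fintype.card_ne_zero⟩
  sInf {t : ℕ | ∃ A : QAlg V (Fintype.card σ), A.queries = t ∧
    ∀ x : V → σ,
      (f x = true → A.acceptProb (fun j => Fintype.equivFin σ (x j)) = 1) ∧
      (f x = false → A.acceptProb (fun j => Fintype.equivFin σ (x j)) = 0)}

/-- Approximate degree of a boolean function. -/
noncomputable def adeg {ι : Type} (F : (ι → Bool) → Bool) : ℕ :=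
  sInf {d : ℕ | ∃ p : MvPolynomial ι ℝ, p.totalDegree ≤ d ∧
    ∀ y : ι → Bool, |MvPolynomial.eval (fun i => if y i then (1 : ℝ) else 0) p -
      (if F y then 1 else 0)| ≤ 1 / 10}
/-! ### The pointer functions of Göös–Pitassi–Watson type -/

/-- A symbol of the input alphabet: a boolean value, a left pointer, a right pointer,
and a back/internal pointer (to a cell or a column, depending on `β`). -/
structure PSym (n m : ℕ) (β : Type) where
  val : Bool
  lp : Option (Fin n × Fin m)
  rp : Option (Fin n × Fin m)
  bp : Option β
deriving DecidableEq

/-- The all-ones symbol `(1,⊥,⊥,⊥)`. -/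
def PSym.one (n m : ℕ) (β : Type) : PSym n m β := ⟨true, none, none, none⟩

/-- The symbol `(0,⊥,⊥,⊥)`. -/
def PSym.zero (n m : ℕ) (β : Type) : PSym n m β := ⟨false, none, none, none⟩

def PSym.equivProd (n m : ℕ) (β : Type) :
    PSym n m β ≃ Bool × Option (Fin n × Fin m) × Option (Fin n × Fin m) × Option β where
  toFun v := (v.val, v.lp, v.rp, v.bp)
  invFun p := ⟨p.1, p.2.1, p.2.2.1, p.2.2.2⟩
  left_inv _ := rfl
  right_inv _ := rfl

instance {n m : ℕ} {β : Type} [Fintype β] : Fintype (PSym n m β) :=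
  Fintype.ofEquiv _ (PSym.equivProd n m β).symm

instance {n m : ℕ} {β : Type} : Nonempty (PSym n m β) := ⟨PSym.one n m β⟩

/-- The sequence of k bits of `j`, most significant first:  the root-to-leaf path
(`false` = left, `true` = right) of the `j`-th leaf in the complete binary tree of depth `k`. -/
def bitsPath (k j : ℕ) : List Bool :=
  ((List.range k).reverse).map fun i => j.testBit i

/-- The root-to-leaf path of the leaf labeled `j` (0-indexed) in the balanced binary tree
with `m` leaves: the complete binary tree if `m` is a power of 2, and otherwise the complete
binary tree on `2 ^ ⌊log₂ m⌋` leaves with a pair of children added to each of the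
`m - 2 ^ ⌊log₂ m⌋` leftmost leaves. -/
def treePath (m j : ℕ) : List Bool :=
  if m - 2 ^ Nat.log 2 m = 0 then bitsPath (Nat.log 2 m) j
  else if j < 2 * (m - 2 ^ Nat.log 2 m) then
    bitsPath (Nat.log 2 m) (j / 2) ++ [j % 2 == 1]
  else bitsPath (Nat.log 2 m) (j - (m - 2 ^ Nat.log 2 m))

/-- Starting at cell `a` and following the left/right pointers of `x` as prescribed by the
list `p` of moves (`false` = left pointer, `true` = right pointer); returns `none` if a
null pointer is encountered. -/
def followPath {n m : ℕ} {β : Type} (x : Fin n × Fin m → PSym n m β)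
    (a : Fin n × Fin m) (p : List Bool) : Option (Fin n × Fin m) :=
  p.foldl (fun acc b => acc.bind fun c => if b then (x c).rp else (x c).lp) (some a)

/-- The conditions for `x` to be a 1-input of `f_{n,m}`, with marked column `b` and special
element `a`: (1) `b` is the unique all-1 column; (2) `a` is the unique cell of column `b`
with `x_a ≠ (1,⊥,⊥,⊥)`; (3) for every column `j ≠ b` the tree path from `a` to the leaf
labeled `j` exists, and ends at a cell `ℓ_j` of column `j` holding a 0; (4) the back pointer
of each `ℓ_j` points to the column `b`. -/
def fCond (n m : ℕ) (x : Fin n × Fin m → PSym n m (Fin m))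
    (b : Fin m) (a : Fin n × Fin m) : Prop :=
  (∀ j : Fin m, (∀ i : Fin n, (x (i, j)).val = true) ↔ j = b) ∧
  a.2 = b ∧
  (∀ i : Fin n, x (i, b) ≠ PSym.one n m (Fin m) ↔ (i, b) = a) ∧
  ∀ j : Fin m, j ≠ b →
    ∃ ℓ : Fin n × Fin m, followPath x a (treePath m j.1) = some ℓ ∧
      ℓ.2 = j ∧ (x ℓ).val = false ∧ (x ℓ).bp = some b

/-- The pointer function `f_{n,m}`, with back pointers to the marked column. -/
noncomputable def fFun (n m : ℕ) (x : Fin n × Fin m → PSym n m (Fin m)) : Bool :=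
  if ∃ b a, fCond n m x b a then true else false

/-- The conditions for `x` to be a 1-input of `g_{n,m}`, with marked column `b` and special
element `a`: (1)–(3) as for `f_{n,m}`, and (4′) the set of columns `j ≠ b` whose highlighted
zero `ℓ_j` has back pointer to `a` has size exactly `m/2`. -/
def gCond (n m : ℕ) (x : Fin n × Fin m → PSym n m (Fin n × Fin m))
    (b : Fin m) (a : Fin n × Fin m) : Prop :=
  (∀ j : Fin m, (∀ i : Fin n, (x (i, j)).val = true) ↔ j = b) ∧
  a.2 = b ∧
  (∀ i : Fin n, x (i, b) ≠ PSym.one n m (Fin n × Fin m) ↔ (i, b) = a) ∧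
  (∀ j : Fin m, j ≠ b →
    ∃ ℓ : Fin n × Fin m, followPath x a (treePath m j.1) = some ℓ ∧
      ℓ.2 = j ∧ (x ℓ).val = false) ∧
  {j : Fin m | j ≠ b ∧ ∃ ℓ : Fin n × Fin m,
      followPath x a (treePath m j.1) = some ℓ ∧ (x ℓ).bp = some a}.ncard = m / 2

/-- The pointer function `g_{n,m}`, where exactly `m/2` of the highlighted zeroes point
back to the special element. -/
noncomputable def gFun (n m : ℕ) (x : Fin n × Fin m → PSym n m (Fin n × Fin m)) : Bool :=
  if ∃ b a, gCond n m x b a then true else false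

/-- Column `j` is good in `x` (for `g_{n,m}`): `x` is a 1-input with marked column `b ≠ j`
and special element `a`, and the highlighted zero of column `j` points back to `a`. -/
def goodColumn (n m : ℕ) (x : Fin n × Fin m → PSym n m (Fin n × Fin m)) (j : Fin m) : Prop :=
  ∃ b a, gCond n m x b a ∧ j ≠ b ∧
    ∃ ℓ : Fin n × Fin m, followPath x a (treePath m j.1) = some ℓ ∧ (x ℓ).bp = some a

/-- The conditions for `x` to be a 1-input of `h_{k,n,m}`, with marked columns `b 0,…,b (k-1)`
and special elements `a 0,…,a (k-1)`: (1) the `b s` are exactly the all-1 columns; (2) `a s` is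
the unique cell of column `b s` with `x_{a s} ≠ (1,⊥,⊥,⊥)`; (3) the internal pointers of the
`a s` form a cycle and all the `a s` have equal left pointers and equal right pointers;
(4) for every non-marked column `j` the tree path from any `a s` to the leaf labeled `j`
exists and ends at a cell `ℓ_j` of column `j` holding a 0. -/
def hCond (k n m : ℕ) (x : Fin n × Fin m → PSym n m (Fin n × Fin m))
    (b : Fin k → Fin m) (a : Fin k → Fin n × Fin m) : Prop :=
  Function.Injective b ∧
  (∀ j : Fin m, (∀ i : Fin n, (x (i, j)).val = true) ↔ ∃ s, b s = j) ∧
  (∀ s, (a s).2 = b s) ∧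
  (∀ s, ∀ i : Fin n, x (i, b s) ≠ PSym.one n m (Fin n × Fin m) ↔ (i, b s) = a s) ∧
  (∀ s : Fin k, (x (a s)).bp = some (a ⟨(s.1 + 1) % k, Nat.mod_lt _ s.pos⟩)) ∧
  (∀ s t : Fin k, (x (a s)).lp = (x (a t)).lp ∧ (x (a s)).rp = (x (a t)).rp) ∧
  ∀ j : Fin m, (∀ s, b s ≠ j) → ∀ s : Fin k,
    ∃ ℓ : Fin n × Fin m, followPath x (a s) (treePath m j.1) = some ℓ ∧
      ℓ.2 = j ∧ (x ℓ).val = false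

/-- The pointer function `h_{k,n,m}` with `k` marked columns and no back pointers. -/
noncomputable def hFun (k n m : ℕ) (x : Fin n × Fin m → PSym n m (Fin n × Fin m)) : Bool :=
  if ∃ b a, hCond k n m x b a then true else false

/-- The hard input `x^ℓ`: cell `(i,j)` holds `(0,⊥,⊥,⊥)` if `i = ℓ j` and `(1,⊥,⊥,⊥)`
otherwise. -/
def xhard (n m : ℕ) (β : Type) (ℓ : Fin m → Fin n) : Fin n × Fin m → PSym n m β :=
  fun c => if c.1 = ℓ c.2 then PSym.zero n m β else PSym.one n m β

/-- The set of (distinct) cells queried among the first `t` queries of `T` on input `x`. -/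
def queriedUpTo {ι σ : Type} [DecidableEq ι] (T : DTree ι σ) (x : ι → σ) (t : ℕ) :
    Finset ι :=
  ((T.queryList x).take t).toFinset
/-! ### The progress measure for the hard distribution `x^ℓ` -/

/-- Column `j` is compromised (for the input `x^ℓ`), given the set `Q` of queried cells:
the zero cell `(ℓ j, j)` has been queried, or more than `n/2` cells of column `j` have been
queried. -/
def compromisedCol (n m : ℕ) (ℓ : Fin m → Fin n) (Q : Finset (Fin n × Fin m))
    (j : Fin m) : Prop :=
  (ℓ j, j) ∈ Q ∨ n < 2 * (Q.filter fun c => c.2 = j).card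

/-- The progress measure `I_t = A_t + (2/n)·B_t` of the decision tree `T` on the input `x^ℓ`
after `t` queries, where `A_t` is the number of compromised columns and `B_t` is the number
of queried cells lying outside compromised columns. -/
noncomputable def Imeasure (n m : ℕ)
    (T : DTree (Fin n × Fin m) (PSym n m (Fin n × Fin m))) (ℓ : Fin m → Fin n) (t : ℕ) : ℝ :=
  ({j : Fin m |
      compromisedCol n m ℓ (queriedUpTo T (xhard n m (Fin n × Fin m) ℓ) t) j}.ncard : ℝ) +
    (2 / n) * ({c : Fin n × Fin m | c ∈ queriedUpTo T (xhard n m (Fin n × Fin m) ℓ) t ∧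
      ¬ compromisedCol n m ℓ (queriedUpTo T (xhard n m (Fin n × Fin m) ℓ) t) c.2}.ncard : ℝ)
/-! ### The balanced binary tree, via root-to-node paths -/

/-- The node set of the balanced binary tree with `m` leaves: each node is identified with
the left/right path from the root to it, so the nodes are exactly the prefixes of the
root-to-leaf paths. -/
def treeNodes (m : ℕ) : Finset (List Bool) :=
  (Finset.range m).biUnion fun j => (treePath m j).inits.toFinset

/-- The leaves of the balanced binary tree with `m` leaves. -/
def leafNodes (m : ℕ) : Finset (List Bool) :=
  (Finset.range m).image fun j => treePath m j

/-- The internal nodes of the balanced binary tree with `m` leaves. -/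
def internalNodes (m : ℕ) : Finset (List Bool) :=
  treeNodes m \ leafNodes m

/-- The subtree rooted at a node `u`: all nodes of which `u` is a prefix. -/
def subtreeOf (m : ℕ) (u : List Bool) : Finset (List Bool) :=
  (treeNodes m).filter fun w => u <+: w

/-! ### The hard distribution for `h_{1,n,m}` -/

/-- A parameter quadruple `(v, π, ℓᴸ, ℓᴺ)` for the hard distribution: a bit `v`, a map `π`
from internal tree nodes to columns, and row maps `ℓᴸ, ℓᴺ` for leaves resp. internal nodes. -/
abbrev HardQ (n m : ℕ) : Type :=
  Bool × ({u : List Bool // u ∈ internalNodes m} → Fin m) × (Fin m → Fin n) × (Fin m → Fin n)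

/-- The valid parameter quadruples: `π` injective and `ℓᴸ j ≠ ℓᴺ j` for all `j`. -/
noncomputable def hardSet (n m : ℕ) : Finset (HardQ n m) :=
  Finset.univ.filter fun q => Function.Injective q.2.1 ∧ ∀ j, q.2.2.1 j ≠ q.2.2.2 j

/-- The column of the root of the tree (`none` if the tree has no internal node). -/
noncomputable def rootCol (n m : ℕ) (q : HardQ n m) : Option (Fin m) :=
  if h : ([] : List Bool) ∈ internalNodes m then some (q.2.1 ⟨[], h⟩) else none

/-- The cell where a child node `w` of an internal node is placed: internal nodes go to
cell `(ℓᴺ (π w), π w)`, the leaf labeled `j` goes to cell `(ℓᴸ j, j)`, and the removed leaf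
(the one labeled by the root's column) yields a null pointer. -/
noncomputable def childCell (n m : ℕ) (q : HardQ n m) (w : List Bool) :
    Option (Fin n × Fin m) :=
  if h : w ∈ internalNodes m then some (q.2.2.2 (q.2.1 ⟨w, h⟩), q.2.1 ⟨w, h⟩)
  else if h2 : ∃ j : Fin m, w = treePath m j.1 ∧ some j ≠ rootCol n m q then
    some (q.2.2.1 (Classical.choose h2), Classical.choose h2)
  else none

/-- The input of the hard distribution determined by the parameter quadruple `q`:
the internal node `u` of the tree is placed at cell `(ℓᴺ (π u), π u)` with left and right
pointers to the cells of its children, value `v` and a self-loop internal pointer if `u` is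
the root, and value 0 otherwise; for `j ≠ π(root)`, the leaf labeled `j` is placed at cell
`(ℓᴸ j, j)` with value 0 and null pointers; all the remaining cells hold `(1,⊥,⊥,⊥)`. -/
noncomputable def hardInput (n m : ℕ) (q : HardQ n m) :
    Fin n × Fin m → PSym n m (Fin n × Fin m) :=
  fun c =>
    if h : ∃ u : {u : List Bool // u ∈ internalNodes m}, q.2.1 u = c.2 ∧ q.2.2.2 c.2 = c.1 then
      { val := if (Classical.choose h).1 = [] then q.1 else false
        lp := childCell n m q ((Classical.choose h).1 ++ [false])
        rp := childCell n m q ((Classical.choose h).1 ++ [true])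
        bp := if (Classical.choose h).1 = [] then some c else none }
    else if some c.2 ≠ rootCol n m q ∧ c.1 = q.2.2.1 c.2 then PSym.zero n m (Fin n × Fin m)
    else PSym.one n m (Fin n × Fin m)

/-- Column `j` directly satisfies (i) or (ii): one of the cells `(ℓᴸ j, j)`, `(ℓᴺ j, j)` has
been queried, or more than half of the cells of column `j` have been queried. -/
def colBad (n m : ℕ) (q : HardQ n m) (Q : Finset (Fin n × Fin m)) (j : Fin m) : Prop :=
  (q.2.2.1 j, j) ∈ Q ∨ (q.2.2.2 j, j) ∈ Q ∨ n < 2 * (Q.filter fun c => c.2 = j).card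

/-- Column `j` is compromised: it satisfies (i) or (ii), or some ancestor `u` of `π⁻¹(j)`
in the tree is such that column `π u` satisfies (i) or (ii). -/
def compromisedCol19 (n m : ℕ) (q : HardQ n m) (Q : Finset (Fin n × Fin m))
    (j : Fin m) : Prop :=
  colBad n m q Q j ∨
  ∃ w u : {u : List Bool // u ∈ internalNodes m}, q.2.1 w = j ∧
    u.1 <+: w.1 ∧ u.1 ≠ w.1 ∧ colBad n m q Q (q.2.1 u)

/-- The progress measure `I_t = min{A_t + (4·C0·log₂ m / n)·B_t, m/2}` of the decision tree
`D` on the hard-distribution input given by `q` after `t` queries, where `A_t` is the number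
of compromised columns and `B_t` the number of queried cells outside compromised columns. -/
noncomputable def Imeasure19 (n m : ℕ) (C0 : ℝ)
    (D : DTree (Fin n × Fin m) (PSym n m (Fin n × Fin m))) (q : HardQ n m) (t : ℕ) : ℝ :=
  min
    (({j : Fin m | compromisedCol19 n m q (queriedUpTo D (hardInput n m q) t) j}.ncard : ℝ) +
      (4 * C0 * Real.logb 2 m / n) *
        ({c : Fin n × Fin m | c ∈ queriedUpTo D (hardInput n m q) t ∧
          ¬ compromisedCol19 n m q (queriedUpTo D (hardInput n m q) t) c.2}.ncard : ℝ))
    (m / 2)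
/-! ### Auxiliary development for Statement 0 -/

namespace S0

/-! #### Part A: generic decision-tree lemmas -/

section Generic

variable {ι σ : Type} [DecidableEq ι]

/-- The full decision tree querying all variables in `l`. -/
def allTree (f : (ι → σ) → Bool) : List ι → (ι → σ) → DTree ι σ
  | [], g => .leaf (f g)
  | v :: vs, g => .node v fun s => allTree f vs (Function.update g v s)

lemma allTree_eval (f : (ι → σ) → Bool) (x : ι → σ) :
    ∀ (l : List ι) (g : ι → σ),
      (allTree f l g).eval x = f (fun i => if i ∈ l then x i else g i) := by
  intro l
  induction l with
  | nil => intro g; simp [allTree, DTree.eval]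
  | cons v vs ih =>
      intro g
      show (allTree f vs (Function.update g v (x v))).eval x = _
      rw [ih]
      congr 1
      funext i
      by_cases hvs : i ∈ vs
      · simp [hvs]
      · by_cases hiv : i = v
        · subst hiv; simp [hvs, Function.update_self]
        · simp [hvs, hiv, Function.update_of_ne hiv]

lemma allTree_cost (f : (ι → σ) → Bool) (x : ι → σ) :
    ∀ (l : List ι) (g : ι → σ), (allTree f l g).cost x = l.length := by
  intro l
  induction l with
  | nil => intro g; rfl
  | cons v vs ih =>
      intro g
      show ((allTree f vs _).queryList x).length + 1 = _
      rw [show ((allTree f vs (Function.update g v (x v))).queryList x).length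
            = (allTree f vs (Function.update g v (x v))).cost x from rfl, ih]
      rfl

variable (A : (ι → Option σ) → ι → σ)

/-- Running a decision tree against the adversary `A`, accumulating the partial
assignment of answered queries. -/
def runP : DTree ι σ → (ι → Option σ) → (ι → Option σ)
  | .leaf _, p => p
  | .node v ch, p =>
      (p v).elim (runP (ch (A p v)) (Function.update p v (some (A p v))))
        (fun s => runP (ch s) p)

lemma runP_node_none {v : ι} {ch : σ → DTree ι σ} {p : ι → Option σ} (hv : p v = none) :
    runP A (.node v ch) p
      = runP A (ch (A p v)) (Function.update p v (some (A p v))) := by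
  show (p v).elim _ _ = _
  rw [hv]
  rfl

lemma runP_node_some {v : ι} {ch : σ → DTree ι σ} {p : ι → Option σ} {s : σ}
    (hv : p v = some s) : runP A (.node v ch) p = runP A (ch s) p := by
  show (p v).elim _ _ = _
  rw [hv]
  rfl

lemma runP_mono : ∀ (T : DTree ι σ) (p : ι → Option σ) {c s},
    p c = some s → runP A T p c = some s := by
  intro T
  induction T with
  | leaf b => intro p c s h; simpa [runP] using h
  | node v ch ih =>
      intro p c s h
      rcases hv : p v with - | s'
      · have hcv : c ≠ v := fun hc => by rw [hc, hv] at h; cases h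
        rw [runP_node_none A hv]
        exact ih _ _ (by rwa [Function.update_of_ne hcv])
      · rw [runP_node_some A hv]
        exact ih _ _ h

/-- Compatibility of a total input with a partial assignment. -/
def Compat (x : ι → σ) (q : ι → Option σ) : Prop := ∀ c s, q c = some s → x c = s

lemma runP_eval : ∀ (T : DTree ι σ) (p : ι → Option σ) (x y : ι → σ),
    Compat x (runP A T p) → Compat y (runP A T p) →
    T.eval x = T.eval y ∧ T.queryList x = T.queryList y := by
  intro T
  induction T with
  | leaf b => intro p x y _ _; exact ⟨rfl, rfl⟩
  | node v ch ih =>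
      intro p x y hx hy
      rcases hv : p v with - | s'
      · rw [runP_node_none A hv] at hx hy
        have hsome : runP A (ch (A p v)) (Function.update p v (some (A p v))) v
            = some (A p v) := runP_mono A _ _ (by simp)
        have hxv : x v = A p v := hx _ _ hsome
        have hyv : y v = A p v := hy _ _ hsome
        have := ih (A p v) (Function.update p v (some (A p v))) x y hx hy
        constructor
        · show (ch (x v)).eval x = (ch (y v)).eval y
          rw [hxv, hyv]; exact this.1
        · show v :: (ch (x v)).queryList x = v :: (ch (y v)).queryList y
          rw [hxv, hyv, this.2]
      · rw [runP_node_some A hv] at hx hy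
        have hsome : runP A (ch s') p v = some s' := runP_mono A _ _ hv
        have hxv : x v = s' := hx _ _ hsome
        have hyv : y v = s' := hy _ _ hsome
        have := ih s' p x y hx hy
        constructor
        · show (ch (x v)).eval x = (ch (y v)).eval y
          rw [hxv, hyv]; exact this.1
        · show v :: (ch (x v)).queryList x = v :: (ch (y v)).queryList y
          rw [hxv, hyv, this.2]

lemma runP_dom : ∀ (T : DTree ι σ) (p : ι → Option σ) (x : ι → σ),
    Compat x (runP A T p) → ∀ c, (runP A T p c).isSome →
    (p c).isSome ∨ c ∈ T.queryList x := by
  intro T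
  induction T with
  | leaf b => intro p x _ c h; exact Or.inl h
  | node v ch ih =>
      intro p x hx c h
      rcases hv : p v with - | s'
      · rw [runP_node_none A hv] at hx h
        have hxv : x v = A p v :=
          hx _ _ (runP_mono A _ _ (by simp))
        have hql : (DTree.node v ch).queryList x = v :: (ch (A p v)).queryList x := by
          show v :: (ch (x v)).queryList x = _
          rw [hxv]
        rcases ih (A p v) _ x hx c h with h' | h'
        · by_cases hcv : c = v
          · subst hcv; right; rw [hql]; exact List.mem_cons_self
          · left; rwa [Function.update_of_ne hcv] at h'
        · right; rw [hql]; exact List.mem_cons_of_mem _ h'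
      · rw [runP_node_some A hv] at hx h
        have hxv : x v = s' := hx _ _ (runP_mono A _ _ hv)
        have hql : (DTree.node v ch).queryList x = v :: (ch s').queryList x := by
          show v :: (ch (x v)).queryList x = _
          rw [hxv]
        rcases ih s' _ x hx c h with h' | h'
        · exact Or.inl h'
        · right; rw [hql]; exact List.mem_cons_of_mem _ h'

lemma runP_inv (I : (ι → Option σ) → Prop)
    (hstep : ∀ p v, p v = none → I p → I (Function.update p v (some (A p v)))) :
    ∀ (T : DTree ι σ) (p : ι → Option σ), I p → I (runP A T p) := by
  intro T
  induction T with
  | leaf b => intro p h; exact h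
  | node v ch ih =>
      intro p h
      rcases hv : p v with - | s'
      · rw [runP_node_none A hv]
        exact ih _ _ (hstep p v hv h)
      · rw [runP_node_some A hv]
        exact ih _ _ h

end Generic

/-! #### Part B: combinatorics of the balanced tree paths -/

section TreePath

lemma length_bitsPath (k j : ℕ) : (bitsPath k j).length = k := by
  simp [bitsPath]

lemma bitsPath_inj {k j j' : ℕ} (hj : j < 2 ^ k) (hj' : j' < 2 ^ k)
    (h : bitsPath k j = bitsPath k j') : j = j' := by
  apply Nat.eq_of_testBit_eq
  intro i
  rcases lt_or_ge i k with hik | hik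
  · exact (List.map_inj_left).1 h i (by simp [hik])
  · rw [Nat.testBit_lt_two_pow (lt_of_lt_of_le hj (Nat.pow_le_pow_right (by norm_num) hik)),
      Nat.testBit_lt_two_pow (lt_of_lt_of_le hj' (Nat.pow_le_pow_right (by norm_num) hik))]

variable {m : ℕ}

lemma log2_ge_two (hm : 4 ≤ m) : 2 ≤ Nat.log 2 m :=
  (Nat.le_log_iff_pow_le (by norm_num) (by omega)).2 (by omega)

lemma pow_log_le (hm : 4 ≤ m) : 2 ^ Nat.log 2 m ≤ m := Nat.pow_log_le_self 2 (by omega)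

lemma lt_pow_log : m < 2 ^ (Nat.log 2 m + 1) := Nat.lt_pow_succ_log_self (by norm_num) m

lemma length_treePath {j : ℕ} :
    (treePath m j).length = Nat.log 2 m ∨
      (treePath m j).length = Nat.log 2 m + 1 := by
  unfold treePath
  split
  · left; exact length_bitsPath _ _
  · split
    · right; simp [length_bitsPath]
    · left; exact length_bitsPath _ _

lemma two_le_length_treePath (hm : 4 ≤ m) {j : ℕ} : 2 ≤ (treePath m j).length := by
  have h2 := log2_ge_two hm
  rcases length_treePath (m := m) (j := j) with h | h <;> omega

lemma treePath_prefix_free (hm : 4 ≤ m) {j j' : ℕ} (hj : j < m) (hj' : j' < m)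
    (h : treePath m j <+: treePath m j') : j = j' := by
  have h2K : 2 ^ Nat.log 2 m ≤ m := pow_log_le hm
  have hm2K : m < 2 ^ (Nat.log 2 m + 1) := lt_pow_log
  have hpow : (2:ℕ) ^ (Nat.log 2 m + 1) = 2 * 2 ^ Nat.log 2 m := by ring
  unfold treePath at h
  by_cases he0 : m - 2 ^ Nat.log 2 m = 0
  · rw [if_pos he0, if_pos he0] at h
    exact bitsPath_inj (by omega) (by omega)
      (h.eq_of_length (by rw [length_bitsPath, length_bitsPath]))
  · rw [if_neg he0, if_neg he0] at h
    by_cases h1 : j < 2 * (m - 2 ^ Nat.log 2 m) <;>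
      by_cases h2 : j' < 2 * (m - 2 ^ Nat.log 2 m)
    · -- both extended
      rw [if_pos h1, if_pos h2] at h
      have heq := h.eq_of_length (by simp [length_bitsPath])
      have hpair := List.append_inj heq (by rw [length_bitsPath, length_bitsPath])
      have hdiv : j / 2 = j' / 2 := bitsPath_inj (by omega) (by omega) hpair.1
      have hmod : (j % 2 == 1) = (j' % 2 == 1) := by
        have h5 := hpair.2
        simpa using h5
      have hmod' : j % 2 = j' % 2 := by
        rcases Nat.mod_two_eq_zero_or_one j with h3 | h3 <;>
          rcases Nat.mod_two_eq_zero_or_one j' with h4 | h4 <;>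
          simp [h3, h4] at hmod <;> omega
      omega
    · -- extended prefix of non-extended: impossible by length
      rw [if_pos h1, if_neg h2] at h
      have hlen := h.length_le
      rw [List.length_append, length_bitsPath, length_bitsPath] at hlen
      simp at hlen
    · -- non-extended prefix of extended
      rw [if_neg h1, if_pos h2] at h
      have h3 := List.prefix_iff_eq_take.1 h
      rw [length_bitsPath] at h3
      have h4 := List.take_left (l₁ := bitsPath (Nat.log 2 m) (j' / 2)) (l₂ := [j' % 2 == 1])
      rw [length_bitsPath] at h4
      rw [h4] at h3
      have := bitsPath_inj (k := Nat.log 2 m) (by omega) (by omega) h3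
      omega
    · -- both non-extended
      rw [if_neg h1, if_neg h2] at h
      have heq := h.eq_of_length (by rw [length_bitsPath, length_bitsPath])
      have := bitsPath_inj (k := Nat.log 2 m) (by omega) (by omega) heq
      omega

lemma treePath_inj (hm : 4 ≤ m) {j j' : ℕ} (hj : j < m) (hj' : j' < m)
    (h : treePath m j = treePath m j') : j = j' :=
  treePath_prefix_free hm hj hj' (h ▸ List.prefix_refl _)

lemma mem_treeNodes_iff {u : List Bool} :
    u ∈ treeNodes m ↔ ∃ j < m, u <+: treePath m j := by
  simp [treeNodes, List.mem_inits]

lemma mem_leafNodes_iff {u : List Bool} :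
    u ∈ leafNodes m ↔ ∃ j < m, u = treePath m j := by
  simp [leafNodes, eq_comm]

lemma strict_prefix_internal (hm : 4 ≤ m) {u : List Bool} {j : ℕ} (hj : j < m)
    (hpre : u <+: treePath m j) (hne : u ≠ treePath m j) :
    u ∈ internalNodes m := by
  rw [internalNodes, Finset.mem_sdiff]
  refine ⟨mem_treeNodes_iff.2 ⟨j, hj, hpre⟩, ?_⟩
  intro hleaf
  obtain ⟨j', hj', hu⟩ := mem_leafNodes_iff.1 hleaf
  rw [hu] at hpre hne
  exact hne (congrArg _ (treePath_prefix_free hm hj' hj hpre))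

lemma nil_internal (hm : 4 ≤ m) : ([] : List Bool) ∈ internalNodes m :=
  strict_prefix_internal hm (j := 0) (by omega) (List.nil_prefix)
    (fun h => by
      have h2 := two_le_length_treePath hm (m := m) (j := 0)
      rw [← h] at h2; simp at h2)

lemma bitsPath_zero (k : ℕ) : bitsPath k 0 = List.replicate k false := by
  rw [List.eq_replicate_iff]
  constructor
  · exact length_bitsPath _ _
  · intro b hb
    simp only [bitsPath, List.mem_map] at hb
    obtain ⟨i, _, rfl⟩ := hb
    exact Nat.zero_testBit i

lemma false_internal (hm : 4 ≤ m) : ([false] : List Bool) ∈ internalNodes m := by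
  have hK := log2_ge_two hm
  have hpre0 : ([false] : List Bool) <+: bitsPath (Nat.log 2 m) 0 := by
    rw [bitsPath_zero]
    refine ⟨List.replicate (Nat.log 2 m - 1) false, ?_⟩
    have h1 : Nat.log 2 m = (Nat.log 2 m - 1) + 1 := by omega
    rw [h1, List.replicate_succ]
    rfl
  have hpre : ([false] : List Bool) <+: treePath m 0 := by
    rw [treePath]
    split
    · exact hpre0
    · rw [if_pos (by omega)]
      exact hpre0.trans (List.prefix_append _ _)
  refine strict_prefix_internal hm (j := 0) (by omega) hpre ?_
  intro h
  have h2 := two_le_length_treePath hm (m := m) (j := 0)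
  rw [← h] at h2; simp at h2

lemma treePath_mem_leafNodes {j : ℕ} (hj : j < m) : treePath m j ∈ leafNodes m :=
  mem_leafNodes_iff.2 ⟨j, hj, rfl⟩

lemma leaf_not_internal {j : ℕ} (hj : j < m) : treePath m j ∉ internalNodes m := by
  rw [internalNodes, Finset.mem_sdiff]
  intro h
  exact h.2 (treePath_mem_leafNodes hj)

lemma prefix_leaf_eq (hm : 4 ≤ m) {u : List Bool} {j : ℕ} (hj : j < m)
    (hpre : u <+: treePath m j) (hni : u ∉ internalNodes m) : u = treePath m j := by
  by_contra hne
  exact hni (strict_prefix_internal hm hj hpre hne)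

lemma sum_two_pow (n : ℕ) : ∑ t ∈ Finset.range n, 2 ^ t = 2 ^ n - 1 := by
  induction n with
  | zero => simp
  | succ n ih =>
      rw [Finset.sum_range_succ, ih]
      have h1 : 1 ≤ 2 ^ n := Nat.one_le_two_pow
      have h2 : (2:ℕ) ^ (n + 1) = 2 * 2 ^ n := by ring
      omega

lemma card_internalNodes_le (hm : 4 ≤ m) : (internalNodes m).card ≤ m - 1 := by
  classical
  have hK := log2_ge_two hm
  have h2K : 2 ^ Nat.log 2 m ≤ m := pow_log_le hm
  have hm2K : m < 2 ^ (Nat.log 2 m + 1) := lt_pow_log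
  have hpow : (2:ℕ) ^ (Nat.log 2 m + 1) = 2 * 2 ^ Nat.log 2 m := by ring
  have hX4 : 4 ≤ 2 ^ Nat.log 2 m :=
    le_trans (by norm_num) (Nat.pow_le_pow_right (by norm_num) hK)
  set stringsLe : Finset (List Bool) :=
    (Finset.range (Nat.log 2 m + 1)).biUnion
      (fun t => (Finset.univ : Finset (Fin t → Bool)).image fun f => List.ofFn f)
    with hSdef
  set nonExt : Finset (List Bool) :=
    (Finset.Ico (m - 2 ^ Nat.log 2 m) (2 ^ Nat.log 2 m)).image
      (fun r => bitsPath (Nat.log 2 m) r) with hNdef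
  have hmemS : ∀ u : List Bool, u.length ≤ Nat.log 2 m → u ∈ stringsLe := by
    intro u hu
    rw [hSdef, Finset.mem_biUnion]
    exact ⟨u.length, Finset.mem_range.2 (by omega),
      Finset.mem_image.2 ⟨u.get, Finset.mem_univ _, List.ofFn_get u⟩⟩
  have hcardS : stringsLe.card ≤ 2 ^ (Nat.log 2 m + 1) - 1 := by
    refine le_trans (Finset.card_biUnion_le) ?_
    rw [← sum_two_pow]
    refine Finset.sum_le_sum ?_
    intro t _
    refine le_trans (Finset.card_image_le) ?_
    simp
  have hcardN : nonExt.card = 2 ^ Nat.log 2 m - (m - 2 ^ Nat.log 2 m) := by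
    rw [hNdef, Finset.card_image_of_injOn, Nat.card_Ico]
    intro r hr r' hr' hrr
    rw [Finset.mem_coe, Finset.mem_Ico] at hr hr'
    exact bitsPath_inj (by omega) (by omega) hrr
  have hNS : nonExt ⊆ stringsLe := by
    intro u hu
    rw [hNdef, Finset.mem_image] at hu
    obtain ⟨r, _, rfl⟩ := hu
    exact hmemS _ (le_of_eq (length_bitsPath _ _))
  have hNleaf : nonExt ⊆ leafNodes m := by
    intro u hu
    rw [hNdef, Finset.mem_image] at hu
    obtain ⟨r, hr, rfl⟩ := hu
    rw [Finset.mem_Ico] at hr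
    refine mem_leafNodes_iff.2 ⟨r + (m - 2 ^ Nat.log 2 m), by omega, ?_⟩
    unfold treePath
    by_cases he0 : m - 2 ^ Nat.log 2 m = 0
    · rw [if_pos he0]; congr 1; omega
    · rw [if_neg he0, if_neg (by omega)]; congr 1; omega
  have hsub : internalNodes m ⊆ stringsLe \ nonExt := by
    intro u hu
    rw [internalNodes, Finset.mem_sdiff] at hu
    obtain ⟨j, hj, hpre⟩ := mem_treeNodes_iff.1 hu.1
    have hlen : u.length ≤ Nat.log 2 m := by
      by_contra hgt
      have hle := hpre.length_le
      have hPl := length_treePath (m := m) (j := j)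
      have : u.length = (treePath m j).length := by omega
      rw [hpre.eq_of_length this] at hu
      exact hu.2 (treePath_mem_leafNodes hj)
    rw [Finset.mem_sdiff]
    exact ⟨hmemS u hlen, fun hne => hu.2 (hNleaf hne)⟩
  have := Finset.card_le_card hsub
  rw [Finset.card_sdiff_of_subset hNS] at this
  omega

end TreePath

/-! #### Part C: the adversary for `f_{2m,m}` -/

section Adversary

variable (m : ℕ)

/-- Cells of the grid. -/
abbrev Cl := Fin (2 * m) × Fin m

/-- Symbols. -/
abbrev Sy := PSym (2 * m) m (Fin m)

/-- The zero symbol with back pointer `r`. -/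
def zbS (r : Fin m) : Sy m := ⟨false, none, none, some r⟩

/-- Number of assigned cells in column `j`. -/
def cnt (p : Cl m → Option (Sy m)) (j : Fin m) : ℕ :=
  (Finset.univ.filter fun i : Fin (2 * m) => (p (i, j)).isSome).card

/-- The adversary: answer all-ones while fewer than `m` cells of the column are
assigned; afterwards answer zeros whose back pointers sweep through all columns. -/
noncomputable def ans (p : Cl m → Option (Sy m)) (c : Cl m) : Sy m :=
  if cnt m p c.2 < m then PSym.one (2 * m) m (Fin m)
  else zbS m ⟨(cnt m p c.2 - m) % m, Nat.mod_lt _ c.2.pos⟩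

/-- The adversary invariant. -/
def Inv (p : Cl m → Option (Sy m)) : Prop :=
  ∀ j : Fin m,
    (∀ r : Fin m, m + r.1 < cnt m p j → ∃ i, p (i, j) = some (zbS m r)) ∧
    (∀ i s, p (i, j) = some s →
      s = PSym.one (2 * m) m (Fin m) ∨ (m < cnt m p j ∧ s.val = false))

variable {m}

lemma cnt_le (p : Cl m → Option (Sy m)) (j : Fin m) : cnt m p j ≤ 2 * m := by
  refine le_trans (Finset.card_filter_le _ _) ?_
  simp

lemma cnt_lt_of_none {p : Cl m → Option (Sy m)} {i : Fin (2 * m)} {j : Fin m}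
    (h : p (i, j) = none) : cnt m p j < 2 * m := by
  have hsub : (Finset.univ.filter fun i' : Fin (2 * m) => (p (i', j)).isSome)
      ⊆ Finset.univ.erase i := by
    intro i' hi'
    rw [Finset.mem_filter] at hi'
    rw [Finset.mem_erase]
    refine ⟨fun he => ?_, Finset.mem_univ _⟩
    rw [he, h] at hi'
    simp at hi'
  have := Finset.card_le_card hsub
  rw [Finset.card_erase_of_mem (Finset.mem_univ _)] at this
  have hcard : (Finset.univ : Finset (Fin (2 * m))).card = 2 * m := by simp
  rw [hcard] at this
  have hm0 : 0 < m := j.pos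
  unfold cnt
  omega

lemma exists_none_of_cnt_lt {p : Cl m → Option (Sy m)} {j : Fin m}
    (h : cnt m p j < 2 * m) : ∃ i, p (i, j) = none := by
  by_contra hno
  push_neg at hno
  have : (Finset.univ.filter fun i : Fin (2 * m) => (p (i, j)).isSome)
      = Finset.univ := by
    refine Finset.filter_true_of_mem ?_
    intro i _
    rcases hs : p (i, j) with - | s
    · exact absurd hs (hno i)
    · simp
  unfold cnt at h
  rw [this] at h
  simp at h

lemma cnt_full {p : Cl m → Option (Sy m)} {j : Fin m}
    (h : ¬∃ i, p (i, j) = none) : cnt m p j = 2 * m := by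
  rcases lt_or_ge (cnt m p j) (2 * m) with hlt | hge
  · exact absurd (exists_none_of_cnt_lt hlt) h
  · exact le_antisymm (cnt_le p j) hge

lemma cnt_update {p : Cl m → Option (Sy m)} {c : Cl m} (hc : p c = none) (s : Sy m)
    (j : Fin m) :
    cnt m (Function.update p c (some s)) j
      = if j = c.2 then cnt m p j + 1 else cnt m p j := by
  obtain ⟨ci, cj⟩ := c
  by_cases hj : j = cj
  · subst hj
    rw [if_pos rfl]
    unfold cnt
    have hset : (Finset.univ.filter fun i : Fin (2 * m) =>
        ((Function.update p (ci, j) (some s)) (i, j)).isSome)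
        = insert ci (Finset.univ.filter fun i : Fin (2 * m) => (p (i, j)).isSome) := by
      ext i
      by_cases hi : i = ci
      · subst hi
        simp [Function.update_self]
      · have : ((i, j) : Cl m) ≠ (ci, j) := fun he => hi (congrArg Prod.fst he)
        simp [Function.update_of_ne this, hi]
    rw [hset, Finset.card_insert_of_notMem]
    intro hmem
    rw [Finset.mem_filter] at hmem
    rw [hc] at hmem
    simp at hmem
  · rw [if_neg hj]
    unfold cnt
    congr 1
    apply Finset.filter_congr
    intro i _
    have : ((i, j) : Cl m) ≠ (ci, cj) := fun he => hj (congrArg Prod.snd he)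
    rw [Function.update_of_ne this]

lemma Inv_bot : Inv m (fun _ => none) := by
  intro j
  constructor
  · intro r hr
    exfalso
    have : cnt m (fun _ => none : Cl m → Option (Sy m)) j = 0 := by
      unfold cnt; simp
    omega
  · intro i s h
    cases h

lemma inv_step : ∀ (p : Cl m → Option (Sy m)) (c : Cl m), p c = none → Inv m p →
    Inv m (Function.update p c (some (ans m p c))) := by
  intro p c hc hp j
  have hcnt := cnt_update hc (ans m p c) j
  by_cases hj : j = c.2
  · subst hj
    rw [if_pos rfl] at hcnt
    have hlt2m : cnt m p c.2 < 2 * m := by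
      obtain ⟨ci, cj⟩ := c
      exact cnt_lt_of_none hc
    by_cases hlt : cnt m p c.2 < m
    · have hans : ans m p c = PSym.one (2 * m) m (Fin m) := by
        unfold ans; rw [if_pos hlt]
      constructor
      · intro r hr
        rw [hcnt] at hr
        omega
      · intro i s his
        by_cases hi : ((i, c.2) : Cl m) = c
        · rw [hi, Function.update_self] at his
          left
          rw [hans] at his
          exact (Option.some_inj.1 his).symm
        · rw [Function.update_of_ne hi] at his
          rcases (hp c.2).2 i s his with h1 | h1
          · exact Or.inl h1
          · exact Or.inr ⟨by omega, h1.2⟩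
    · have hmod : (cnt m p c.2 - m) % m = cnt m p c.2 - m :=
        Nat.mod_eq_of_lt (by omega)
      have hans : ans m p c = zbS m ⟨cnt m p c.2 - m, by omega⟩ := by
        unfold ans
        rw [if_neg hlt]
        congr 1
        exact Fin.ext hmod
      constructor
      · intro r hr
        rw [hcnt] at hr
        by_cases hrc : m + r.1 < cnt m p c.2
        · obtain ⟨i, hi⟩ := (hp c.2).1 r hrc
          refine ⟨i, ?_⟩
          have hne : ((i, c.2) : Cl m) ≠ c := by
            intro he
            rw [he, hc] at hi
            cases hi
          rw [Function.update_of_ne hne]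
          exact hi
        · have hr2 : r = (⟨cnt m p c.2 - m, by omega⟩ : Fin m) :=
            Fin.ext (show r.1 = cnt m p c.2 - m by omega)
          refine ⟨c.1, ?_⟩
          have hcc : ((c.1, c.2) : Cl m) = c := rfl
          rw [hcc, Function.update_self, hans, hr2]
      · intro i s his
        by_cases hi : ((i, c.2) : Cl m) = c
        · rw [hi, Function.update_self] at his
          right
          refine ⟨by omega, ?_⟩
          rw [hans] at his
          rw [← Option.some_inj.1 his]
          rfl
        · rw [Function.update_of_ne hi] at his
          rcases (hp c.2).2 i s his with h1 | h1
          · exact Or.inl h1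
          · exact Or.inr ⟨by omega, h1.2⟩
  · rw [if_neg hj] at hcnt
    constructor
    · intro r hr
      rw [hcnt] at hr
      obtain ⟨i, hi⟩ := (hp j).1 r hr
      refine ⟨i, ?_⟩
      have hne : ((i, j) : Cl m) ≠ c := by
        intro he
        exact hj (by rw [← he])
      rw [Function.update_of_ne hne]
      exact hi
    · intro i s his
      have hne : ((i, j) : Cl m) ≠ c := by
        intro he
        exact hj (by rw [← he])
      rw [Function.update_of_ne hne] at his
      rcases (hp j).2 i s his with h1 | h1
      · exact Or.inl h1
      · exact Or.inr ⟨by omega, h1.2⟩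

lemma sum_cnt (p : Cl m → Option (Sy m)) :
    ∑ j : Fin m, cnt m p j
      = (Finset.univ.filter fun c : Cl m => (p c).isSome).card := by
  rw [Finset.card_eq_sum_card_fiberwise
    (f := fun c : Cl m => c.2) (t := Finset.univ) (fun c _ => Finset.mem_univ _)]
  apply Finset.sum_congr rfl
  intro j _
  have himg : ((Finset.univ.filter fun c : Cl m => (p c).isSome).filter
        fun c => c.2 = j)
      = (Finset.univ.filter fun i : Fin (2 * m) => (p (i, j)).isSome).image
        (fun i => (i, j)) := by
    ext c
    simp only [Finset.mem_filter, Finset.mem_image, Finset.mem_univ, true_and,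
      Finset.filter_filter]
    constructor
    · rintro ⟨hs, hc2⟩
      have hcc : ((c.1, j) : Cl m) = c := by rw [← hc2]
      exact ⟨c.1, by rw [hcc]; exact hs, hcc⟩
    · rintro ⟨i, hs, rfl⟩
      exact ⟨hs, rfl⟩
  have hinj : Function.Injective (fun i : Fin (2 * m) => ((i, j) : Cl m)) := by
    intro i i' hii
    exact congrArg Prod.fst hii
  rw [himg, Finset.card_image_of_injective _ hinj]
  rfl

end Adversary

/-! #### Part D: construction of the consistent 1-input -/

section Build

variable {m : ℕ}

/-- Pointer of the cell of internal node `u` in direction `d`. -/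
noncomputable def ptrF (b : Fin m) (pl : {u : List Bool // u ∈ internalNodes m} → Cl m)
    (L : Fin m → Cl m) (u : List Bool) (d : Bool) : Option (Cl m) :=
  if h : u ++ [d] ∈ internalNodes m then some (pl ⟨u ++ [d], h⟩)
  else if h2 : ∃ j : Fin m, j ≠ b ∧ u ++ [d] = treePath m j.1 then
    some (L (Classical.choose h2))
  else none

/-- The 1-input built from the placements `pl` (internal nodes) and `L` (leaves). -/
noncomputable def x1F (pf : Cl m → Option (Sy m)) (b : Fin m)
    (pl : {u : List Bool // u ∈ internalNodes m} → Cl m) (L : Fin m → Cl m)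
    (c : Cl m) : Sy m :=
  if h1 : ∃ v : {u : List Bool // u ∈ internalNodes m}, pl v = c then
    ⟨decide ((Classical.choose h1).1 = []),
     ptrF b pl L (Classical.choose h1).1 false,
     ptrF b pl L (Classical.choose h1).1 true, none⟩
  else if ∃ j : Fin m, j ≠ b ∧ L j = c ∧ pf c = none then zbS m b
  else (pf c).getD (PSym.one (2 * m) m (Fin m))

section BuildLemmas

variable (pf : Cl m → Option (Sy m)) (b : Fin m)
variable (pl : {u : List Bool // u ∈ internalNodes m} → Cl m) (L : Fin m → Cl m)

lemma x1F_at_place (Hinj : Function.Injective pl)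
    (v : {u : List Bool // u ∈ internalNodes m}) :
    x1F pf b pl L (pl v)
      = ⟨decide (v.1 = []), ptrF b pl L v.1 false, ptrF b pl L v.1 true, none⟩ := by
  unfold x1F
  have h1 : ∃ v' : {u : List Bool // u ∈ internalNodes m}, pl v' = pl v := ⟨v, rfl⟩
  rw [dif_pos h1]
  have hv : Classical.choose h1 = v := Hinj (Classical.choose_spec h1)
  rw [hv]

lemma x1F_other {c : Cl m} (h1 : ∀ v, pl v ≠ c)
    (h2 : ¬∃ j : Fin m, j ≠ b ∧ L j = c ∧ pf c = none) :
    x1F pf b pl L c = (pf c).getD (PSym.one (2 * m) m (Fin m)) := by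
  unfold x1F
  rw [dif_neg (fun ⟨v, hv⟩ => h1 v hv), if_neg h2]

lemma x1F_leaf {c : Cl m} (h1 : ∀ v, pl v ≠ c)
    (h2 : ∃ j : Fin m, j ≠ b ∧ L j = c ∧ pf c = none) :
    x1F pf b pl L c = zbS m b := by
  unfold x1F
  rw [dif_neg (fun ⟨v, hv⟩ => h1 v hv), if_pos h2]

end BuildLemmas

lemma build (hm : 4 ≤ m) (pf : Cl m → Option (Sy m)) (hInv : Inv m pf)
    (b : Fin m) (hb : cnt m pf b < m)
    (a : Cl m) (ha2 : a.2 = b) (hpfa : pf a = none)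
    (L : Fin m → Cl m) (hL1 : ∀ j, (L j).2 = j)
    (hL2 : ∀ j, pf (L j) = none ∨ pf (L j) = some (zbS m b))
    (pl : {u : List Bool // u ∈ internalNodes m} → Cl m)
    (Hinj : Function.Injective pl)
    (Hnone : ∀ v, pf (pl v) = none)
    (Hnil : ∀ v, v.1 = [] → pl v = a)
    (Hcol : ∀ v, v.1 ≠ [] → (pl v).2 ≠ b)
    (HnotL : ∀ v, v.1 ≠ [] → ∀ j, pl v ≠ L j) :
    (∀ c s, pf c = some s → x1F pf b pl L c = s) ∧
      fCond (2 * m) m (x1F pf b pl L) b a := by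
  set x1 := x1F pf b pl L with hx1def
  -- compatibility
  have hcompat : ∀ c s, pf c = some s → x1 c = s := by
    intro c s hs
    have hA : ∀ v, pl v ≠ c := by
      intro v hv
      have := Hnone v
      rw [hv, hs] at this
      cases this
    have hB : ¬∃ j : Fin m, j ≠ b ∧ L j = c ∧ pf c = none := by
      rintro ⟨j, -, -, hn⟩
      rw [hn] at hs
      cases hs
    rw [hx1def, x1F_other pf b pl L hA hB, hs]
    rfl
  -- the root cell
  have hpl_nil : pl ⟨[], nil_internal hm⟩ = a := Hnil _ rfl
  have hva : x1 a = ⟨true, ptrF b pl L [] false, ptrF b pl L [] true, none⟩ := by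
    rw [hx1def, ← hpl_nil, x1F_at_place pf b pl L Hinj]
    simp
  -- the other cells of column b
  have hone : ∀ i : Fin (2 * m), (i, b) ≠ a →
      x1 (i, b) = PSym.one (2 * m) m (Fin m) := by
    intro i hi
    have hA : ∀ v, pl v ≠ (i, b) := by
      intro v hv
      by_cases hnil : v.1 = []
      · rw [Hnil v hnil] at hv
        exact hi hv.symm
      · exact Hcol v hnil (by rw [hv])
    have hB : ¬∃ j : Fin m, j ≠ b ∧ L j = (i, b) ∧ pf (i, b) = none := by
      rintro ⟨j, hj, hLj, -⟩
      apply hj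
      rw [← hL1 j, hLj]
    rw [hx1def, x1F_other pf b pl L hA hB]
    rcases hs : pf (i, b) with - | s
    · rfl
    · rcases (hInv b).2 i s hs with h1 | h1
      · rw [h1]; rfl
      · exfalso; omega
  -- leaf values
  have hleaf : ∀ j : Fin m, j ≠ b → x1 (L j) = zbS m b := by
    intro j hj
    have hA : ∀ v, pl v ≠ L j := by
      intro v
      by_cases hnil : v.1 = []
      · rw [Hnil v hnil]
        intro hv
        apply hj
        rw [← hL1 j, ← hv, ha2]
      · exact HnotL v hnil j
    rcases hL2 j with hn | hzs
    · rw [hx1def]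
      exact x1F_leaf pf b pl L hA ⟨j, hj, rfl, hn⟩
    · have hB : ¬∃ j' : Fin m, j' ≠ b ∧ L j' = L j ∧ pf (L j) = none := by
        rintro ⟨j', -, -, hnone⟩
        rw [hzs] at hnone
        cases hnone
      rw [hx1def, x1F_other pf b pl L hA hB, hzs]
      rfl
  -- the pointer chase
  have hpath : ∀ (j : Fin m), j ≠ b → ∀ u, u <+: treePath m j.1 →
      followPath x1 a u
        = some (if h : u ∈ internalNodes m then pl ⟨u, h⟩ else L j) := by
    intro j hj u
    induction u using List.reverseRecOn with
    | nil =>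
        intro _
        rw [dif_pos (nil_internal hm), Hnil _ rfl]
        rfl
    | append_singleton u d ih =>
        intro hpre
        have hu : u <+: treePath m j.1 := (List.prefix_append u [d]).trans hpre
        have hustr : u ≠ treePath m j.1 := by
          intro he
          have hl := hpre.length_le
          rw [List.length_append, he] at hl
          simp at hl
        have hint : u ∈ internalNodes m := strict_prefix_internal hm j.isLt hu hustr
        have ihu := ih hu
        rw [dif_pos hint] at ihu
        have hfold : followPath x1 a (u ++ [d])
            = (followPath x1 a u).bind
              (fun c => if d then (x1 c).rp else (x1 c).lp) := by
          unfold followPath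
          rw [List.foldl_append]
          rfl
        rw [hfold, ihu, Option.bind_some]
        have hx1pl := x1F_at_place pf b pl L Hinj ⟨u, hint⟩
        rw [← hx1def] at hx1pl
        rw [hx1pl]
        have hptr : (if d then
            (⟨decide (u = []), ptrF b pl L u false, ptrF b pl L u true,
              none⟩ : Sy m).rp
            else (⟨decide (u = []), ptrF b pl L u false, ptrF b pl L u true,
              none⟩ : Sy m).lp) = ptrF b pl L u d := by
          cases d <;> rfl
        rw [hptr]
        unfold ptrF
        by_cases hmem : u ++ [d] ∈ internalNodes m
        · rw [dif_pos hmem, dif_pos hmem]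
        · rw [dif_neg hmem, dif_neg hmem]
          have hleafu : u ++ [d] = treePath m j.1 :=
            prefix_leaf_eq hm j.isLt hpre hmem
          have hex : ∃ j' : Fin m, j' ≠ b ∧ u ++ [d] = treePath m j'.1 :=
            ⟨j, hj, hleafu⟩
          rw [dif_pos hex]
          congr 1
          have hsp := Classical.choose_spec hex
          have hjj : Classical.choose hex = j := by
            apply Fin.ext
            exact treePath_inj hm (Classical.choose hex).isLt j.isLt
              (by rw [← hsp.2, hleafu])
          rw [hjj]
  refine ⟨hcompat, ?_, ha2, ?_, ?_⟩
  · -- condition (1)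
    intro j
    constructor
    · intro hall
      by_contra hjb
      have h2 : ((L j).1, j) = L j := Prod.ext rfl (hL1 j).symm
      have h1 := hall (L j).1
      rw [h2] at h1
      rw [hleaf j hjb] at h1
      simp [zbS] at h1
    · intro he i
      rw [he]
      by_cases hia : (i, b) = a
      · rw [hia, hva]
      · rw [hone i hia]
        rfl
  · -- condition (3)
    intro i
    constructor
    · intro hne
      by_contra hia
      exact hne (hone i hia)
    · intro h
      rw [h, hva]
      have hlp : ptrF b pl L [] false
          = some (pl ⟨[false], false_internal hm⟩) := by
        unfold ptrF
        simp only [List.nil_append]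
        rw [dif_pos (false_internal hm)]
      intro heq
      have h2 := congrArg PSym.lp heq
      rw [hlp] at h2
      cases h2
  · -- condition (4)
    intro j hj
    refine ⟨L j, ?_, hL1 j, ?_, ?_⟩
    · have := hpath j hj (treePath m j.1) (List.prefix_refl _)
      rw [dif_neg (leaf_not_internal j.isLt)] at this
      exact this
    · rw [hleaf j hj]
      rfl
    · rw [hleaf j hj]
      rfl

/-- Existence of a consistent 1-input when some column has fewer than `m` assigned
cells and fewer than `m²` cells are assigned in total. -/
lemma one_input (hm : 4 ≤ m) (pf : Cl m → Option (Sy m)) (hInv : Inv m pf)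
    (b : Fin m) (hb : cnt m pf b < m)
    (hD : (Finset.univ.filter fun c : Cl m => (pf c).isSome).card < m * m) :
    ∃ x1 : Cl m → Sy m, (∀ c s, pf c = some s → x1 c = s) ∧
      ∃ a, fCond (2 * m) m x1 b a := by
  classical
  -- leaf cells
  have hcol : ∀ j : Fin m, ∃ c : Cl m,
      c.2 = j ∧ (pf c = none ∨ pf c = some (zbS m b)) := by
    intro j
    by_cases hfull : ∃ i, pf (i, j) = none
    · obtain ⟨i, hi⟩ := hfull
      exact ⟨(i, j), rfl, Or.inl hi⟩
    · have hcnt : cnt m pf j = 2 * m := cnt_full hfull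
      obtain ⟨i, hi⟩ := (hInv j).1 b (by have := b.isLt; omega)
      exact ⟨(i, j), rfl, Or.inr hi⟩
  choose L hL1 hL2 using hcol
  -- the special element
  have hbex : ∃ i, pf (i, b) = none := by
    apply exists_none_of_cnt_lt
    have := b.pos
    omega
  obtain ⟨ia, hia⟩ := hbex
  -- the free cells
  set Free : Finset (Cl m) := Finset.univ.filter
    (fun c => pf c = none ∧ c.2 ≠ b ∧ ∀ j : Fin m, c ≠ L j) with hFreedef
  have hFreecard : m - 1 ≤ Free.card := by
    have hcompl : Freeᶜ ⊆ ((Finset.univ.filter fun c : Cl m => (pf c).isSome)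
        ∪ (Finset.univ.filter fun c : Cl m => c.2 = b))
        ∪ Finset.univ.image L := by
      intro c hc
      rw [Finset.mem_compl, hFreedef, Finset.mem_filter] at hc
      push_neg at hc
      rw [Finset.mem_union, Finset.mem_union, Finset.mem_filter, Finset.mem_filter,
        Finset.mem_image]
      by_cases h1 : pf c = none
      · by_cases h2 : c.2 = b
        · exact Or.inl (Or.inr ⟨Finset.mem_univ _, h2⟩)
        · obtain ⟨j, hj⟩ := hc (Finset.mem_univ _) h1 h2
          exact Or.inr ⟨j, Finset.mem_univ _, hj.symm⟩
      · refine Or.inl (Or.inl ⟨Finset.mem_univ _, ?_⟩)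
        rcases hs : pf c with - | s
        · exact absurd hs h1
        · simp
    have hcard1 : (Finset.univ.filter fun c : Cl m => c.2 = b).card = 2 * m := by
      have himg : (Finset.univ.filter fun c : Cl m => c.2 = b)
          = Finset.univ.image (fun i : Fin (2 * m) => ((i, b) : Cl m)) := by
        ext c
        simp only [Finset.mem_filter, Finset.mem_image, Finset.mem_univ, true_and]
        constructor
        · intro h2
          exact ⟨c.1, by rw [← h2]⟩
        · rintro ⟨i, rfl⟩
          rfl
      rw [himg, Finset.card_image_of_injective _
        (fun i i' hii => congrArg Prod.fst hii)]
      simp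
    have hcard2 : (Finset.univ.image L).card ≤ m :=
      le_trans (Finset.card_image_le) (by simp)
    have hcc := Finset.card_le_card hcompl
    have hcu := Finset.card_union_le
      ((Finset.univ.filter fun c : Cl m => (pf c).isSome)
        ∪ (Finset.univ.filter fun c : Cl m => c.2 = b)) (Finset.univ.image L)
    have hcu2 := Finset.card_union_le
      (Finset.univ.filter fun c : Cl m => (pf c).isSome)
      (Finset.univ.filter fun c : Cl m => c.2 = b)
    have hcompl2 := Finset.card_compl (s := Free)
    have hN : Fintype.card (Cl m) = 2 * (m * m) := by
      simp [mul_assoc]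
    have hmm : 4 * m ≤ m * m := Nat.mul_le_mul_right m hm
    omega
  -- the embedding of nonroot internal nodes into free cells
  have hcardInt : ((internalNodes m).erase []).card ≤ m - 1 :=
    le_trans (Finset.card_le_card (Finset.erase_subset _ _))
      (card_internalNodes_le hm)
  have hcards : Fintype.card {u : List Bool // u ∈ (internalNodes m).erase []}
      ≤ Fintype.card {c : Cl m // c ∈ Free} := by
    rw [Fintype.card_coe, Fintype.card_coe]
    omega
  obtain ⟨emb⟩ := Function.Embedding.nonempty_of_card_le hcards
  set a : Cl m := (ia, b) with hadef
  set pl : {u : List Bool // u ∈ internalNodes m} → Cl m := fun v =>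
    if h : v.1 = [] then a
    else (emb ⟨v.1, Finset.mem_erase.2 ⟨h, v.2⟩⟩ : {c : Cl m // c ∈ Free}).1
    with hpldef
  have hplFree : ∀ v (h : v.1 ≠ []), pl v ∈ Free := by
    intro v h
    rw [hpldef]
    dsimp only
    rw [dif_neg h]
    exact (emb ⟨v.1, Finset.mem_erase.2 ⟨h, v.2⟩⟩).2
  have hFree_prop : ∀ c ∈ Free, pf c = none ∧ c.2 ≠ b ∧ ∀ j : Fin m, c ≠ L j := by
    intro c hc
    rw [hFreedef, Finset.mem_filter] at hc
    exact hc.2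
  have Hnil : ∀ v, v.1 = [] → pl v = a := by
    intro v h
    rw [hpldef]
    dsimp only
    rw [dif_pos h]
  have Hnone : ∀ v, pf (pl v) = none := by
    intro v
    by_cases h : v.1 = []
    · rw [Hnil v h, hadef]
      exact hia
    · exact (hFree_prop _ (hplFree v h)).1
  have Hcol : ∀ v, v.1 ≠ [] → (pl v).2 ≠ b := by
    intro v h
    exact (hFree_prop _ (hplFree v h)).2.1
  have HnotL : ∀ v, v.1 ≠ [] → ∀ j, pl v ≠ L j := by
    intro v h
    exact (hFree_prop _ (hplFree v h)).2.2
  have Hinj : Function.Injective pl := by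
    intro v v' hvv
    by_cases h : v.1 = [] <;> by_cases h' : v'.1 = []
    · exact Subtype.ext (by rw [h, h'])
    · exfalso
      rw [Hnil v h] at hvv
      exact Hcol v' h' (by rw [← hvv, hadef])
    · exfalso
      rw [Hnil v' h'] at hvv
      exact Hcol v h (by rw [hvv, hadef])
    · rw [hpldef] at hvv
      dsimp only at hvv
      rw [dif_neg h, dif_neg h'] at hvv
      have h0 := emb.injective (Subtype.ext hvv)
      rw [Subtype.mk.injEq] at h0
      exact Subtype.ext h0
  obtain ⟨hcompat, hcond⟩ := build hm pf hInv b hb a rfl hia L hL1 hL2 pl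
    Hinj Hnone Hnil Hcol HnotL
  exact ⟨x1F pf b pl L, hcompat, a, hcond⟩

end Build



end S0

/-- For every integer `m ≥ 4`, the deterministic query complexity of
`f_{2m,m}` satisfies `D(f_{2m,m}) ≥ m²`. -/
theorem statement0 (m : ℕ) (hm : 4 ≤ m) :
    m ^ 2 ≤ detComplexity (fFun (2 * m) m) := by
  classical
  unfold detComplexity
  apply le_csInf
  · -- the set of depths is nonempty: the full decision tree computes `fFun`
    refine ⟨(Finset.univ.toList (α := Fin (2 * m) × Fin m)).length,
      S0.allTree (fFun (2 * m) m) Finset.univ.toList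
        (fun _ => PSym.one (2 * m) m (Fin m)), ?_, ?_⟩
    · intro x
      rw [S0.allTree_eval]
      congr 1
      funext i
      rw [if_pos (Finset.mem_toList.2 (Finset.mem_univ _))]
    · intro x
      rw [S0.allTree_cost]
  · rintro d ⟨T, hTc, hTcost⟩
    by_contra hlt
    push_neg at hlt
    rw [pow_two] at hlt
    set pf := S0.runP (S0.ans m) T (fun _ => none) with hpfdef
    have hInv : S0.Inv m pf :=
      S0.runP_inv (S0.ans m) (S0.Inv m) (fun p v hv hp => S0.inv_step p v hv hp)
        T _ S0.Inv_bot
    set x0 : S0.Cl m → S0.Sy m :=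
      fun c => (pf c).getD (PSym.zero (2 * m) m (Fin m)) with hx0def
    have hcompat0 : S0.Compat x0 pf := by
      intro c s h
      rw [hx0def]
      dsimp only
      rw [h]
      rfl
    -- the number of assigned cells is at most the cost on `x0`
    have hDsub : (Finset.univ.filter fun c : S0.Cl m => (pf c).isSome)
        ⊆ (T.queryList x0).toFinset := by
      intro c hc
      rw [Finset.mem_filter] at hc
      rcases S0.runP_dom (S0.ans m) T _ x0 hcompat0 c hc.2 with h | h
      · simp at h
      · exact List.mem_toFinset.2 h
    have hDcard : (Finset.univ.filter fun c : S0.Cl m => (pf c).isSome).card ≤ d :=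
      le_trans (Finset.card_le_card hDsub)
        (le_trans (List.toFinset_card_le _) (hTcost x0))
    have hDlt : (Finset.univ.filter fun c : S0.Cl m => (pf c).isSome).card < m * m :=
      lt_of_le_of_lt hDcard hlt
    -- some column has fewer than m assigned cells
    obtain ⟨b, hb⟩ : ∃ b : Fin m, S0.cnt m pf b < m := by
      by_contra hall
      push_neg at hall
      have h1 : m * m ≤ ∑ j : Fin m, S0.cnt m pf j := by
        have h2 := Finset.card_nsmul_le_sum Finset.univ
          (fun j : Fin m => S0.cnt m pf j) m (fun j _ => hall j)
        rwa [Finset.card_univ, Fintype.card_fin, smul_eq_mul] at h2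
      rw [S0.sum_cnt] at h1
      omega
    obtain ⟨x1, hcompat1, a, hcond⟩ := S0.one_input hm pf hInv b hb hDlt
    have heval := (S0.runP_eval (S0.ans m) T (fun _ => none) x0 x1 hcompat0
      (fun c s h => hcompat1 c s h)).1
    have hf0 : fFun (2 * m) m x0 = false := by
      unfold fFun
      rw [if_neg]
      rintro ⟨b', a', hc1, -⟩
      have hall := (hc1 b').2 rfl
      by_cases hfull : ∃ i, pf (i, b') = none
      · obtain ⟨i, hi⟩ := hfull
        have h2 := hall i
        rw [hx0def] at h2
        dsimp only at h2
        rw [hi] at h2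
        cases h2
      · obtain ⟨i, hi⟩ := (hInv b').1 ⟨0, by omega⟩
          (by rw [S0.cnt_full hfull]; omega)
        have h2 := hall i
        rw [hx0def] at h2
        dsimp only at h2
        rw [hi] at h2
        cases h2
    have hf1 : fFun (2 * m) m x1 = true := by
      unfold fFun
      rw [if_pos ⟨b, a, hcond⟩]
    rw [hTc x0, hTc x1, hf0, hf1] at heval
    cases heval
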